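/- Let b ∈ C_b^{2,2} satisfy the dissipativity condition with constant γ > 0. Then for the y-derivative flows of the frozen equation started at (x₁,y₁) and (x₂,y₂) with the same noise path, one has for all t ≥ 0: |∇_y X^{x₁,y₁}_t − ∇_y X^{x₂,y₂}_t|² ≤ C·t·e^{-γt/2}|x₁ − x₂|² + C|y₁ − y₂|², where C = C(‖b‖₂, γ) does not depend on t. -/

import Mathlib

open scoped RealInnerProductSpace

/-- Grönwall-type comparison: if `g 0 = 0` and `g' ≤ -γ g + a e^{-γs/2} + b₀`, then
`g t ≤ a t e^{-γt/2} + b₀/γ`. -/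
lemma gron_aux {γ a b₀ : ℝ} (hγ : 0 < γ) (ha : 0 ≤ a) (hb₀ : 0 ≤ b₀)
    {g g' : ℝ → ℝ} (hg0 : g 0 = 0)
    (hd : ∀ s, HasDerivAt g (g' s) s)
    (hle : ∀ s, 0 ≤ s → g' s ≤ -γ * g s + a * Real.exp (-γ * s / 2) + b₀)
    {t : ℝ} (ht : 0 ≤ t) :
    g t ≤ a * t * Real.exp (-γ * t / 2) + b₀ / γ := by
  set φ : ℝ → ℝ := fun s => Real.exp (γ * s) * g s
    - (a * (2 / γ) * (Real.exp (γ * s / 2) - 1) + b₀ / γ * (Real.exp (γ * s) - 1)) with hφ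
  have hdφ : ∀ s, HasDerivAt φ
      (γ * Real.exp (γ * s) * g s + Real.exp (γ * s) * g' s
        - (a * (2 / γ) * (γ / 2 * Real.exp (γ * s / 2)) + b₀ / γ * (γ * Real.exp (γ * s)))) s := by
    intro s
    have h1 : HasDerivAt (fun s => Real.exp (γ * s)) (γ * Real.exp (γ * s)) s := by
      simpa [mul_comm, Function.comp_def] using (Real.hasDerivAt_exp (γ * s)).comp s
        ((hasDerivAt_id s).const_mul γ)
    have h2 : HasDerivAt (fun s => Real.exp (γ * s / 2)) (γ / 2 * Real.exp (γ * s / 2)) s := by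
      have : HasDerivAt (fun s : ℝ => γ * s / 2) (γ / 2) s := by
        simpa using ((hasDerivAt_id s).const_mul γ).div_const 2
      simpa [mul_comm, Function.comp_def] using (Real.hasDerivAt_exp (γ * s / 2)).comp s this
    exact (h1.mul (hd s)).sub
      ((((h2.sub_const 1).const_mul (a * (2 / γ)))).add
        (((h1.sub_const 1)).const_mul (b₀ / γ)))
  have hφ0 : φ 0 = 0 := by simp [hφ, hg0]
  have hmono : AntitoneOn φ (Set.Icc 0 t) := by
    apply antitoneOn_of_deriv_nonpos (convex_Icc 0 t)
    · exact fun s _ => (hdφ s).continuousAt.continuousWithinAt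
    · exact fun s _ => (hdφ s).differentiableAt.differentiableWithinAt
    · intro s hs
      rw [(hdφ s).deriv]
      have hs0 : 0 ≤ s := le_of_lt (Set.mem_Ioo.mp (by simpa using hs)).1
      have h := hle s hs0
      have hexp : 0 < Real.exp (γ * s) := Real.exp_pos _
      have key : Real.exp (γ * s) * g' s ≤ Real.exp (γ * s) * (-γ * g s + a * Real.exp (-γ * s / 2) + b₀) :=
        mul_le_mul_of_nonneg_left h hexp.le
      have e1 : Real.exp (γ * s) * Real.exp (-γ * s / 2) = Real.exp (γ * s / 2) := by
        rw [← Real.exp_add]; ring_nf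
      have e2 : a * (2 / γ) * (γ / 2 * Real.exp (γ * s / 2)) = a * Real.exp (γ * s / 2) := by
        field_simp
      have e3 : b₀ / γ * (γ * Real.exp (γ * s)) = b₀ * Real.exp (γ * s) := by
        field_simp
      nlinarith [key, e1, e2, e3]
  have hφt : φ t ≤ 0 := by
    have := hmono (Set.left_mem_Icc.mpr ht) (Set.right_mem_Icc.mpr ht) ht
    rwa [hφ0] at this
  have hexp : 0 < Real.exp (γ * t) := Real.exp_pos _
  have hineq : Real.exp (γ * t) * g t ≤
      a * (2 / γ) * (Real.exp (γ * t / 2) - 1) + b₀ / γ * (Real.exp (γ * t) - 1) := by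
    have := hφt; simp only [hφ] at this; linarith
  have hkey : g t ≤ a * (2 / γ) * (Real.exp (-γ * t / 2) - Real.exp (-γ * t))
      + b₀ / γ * (1 - Real.exp (-γ * t)) := by
    have hineq' : g t ≤ (a * (2 / γ) * (Real.exp (γ * t / 2) - 1) + b₀ / γ * (Real.exp (γ * t) - 1)) / Real.exp (γ * t) :=
      (le_div_iff₀' hexp).mpr hineq
    calc g t ≤ (a * (2 / γ) * (Real.exp (γ * t / 2) - 1) + b₀ / γ * (Real.exp (γ * t) - 1)) / Real.exp (γ * t) := hineq'
    _ = a * (2 / γ) * (Real.exp (γ * t / 2) / Real.exp (γ * t) - 1 / Real.exp (γ * t))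
        + b₀ / γ * (1 - 1 / Real.exp (γ * t)) := by field_simp
    _ = a * (2 / γ) * (Real.exp (-γ * t / 2) - Real.exp (-γ * t))
        + b₀ / γ * (1 - Real.exp (-γ * t)) := by
        rw [← Real.exp_sub, one_div, ← Real.exp_neg,
          show γ * t / 2 - γ * t = -γ * t / 2 by ring, show -(γ * t) = -γ * t by ring]
  have h1 : Real.exp (-γ * t / 2) - Real.exp (-γ * t) ≤ γ * t / 2 * Real.exp (-γ * t / 2) := by
    have h2 : Real.exp (-γ * t) = Real.exp (-γ * t / 2) * Real.exp (-γ * t / 2) := by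
      rw [← Real.exp_add]; ring_nf
    have h3 : 1 - γ * t / 2 ≤ Real.exp (-(γ * t / 2)) := by
      have := Real.add_one_le_exp (-(γ * t / 2)); linarith
    have h4 : 0 < Real.exp (-γ * t / 2) := Real.exp_pos _
    have h5 : -(γ*t/2) = -γ*t/2 := by ring
    rw [h5] at h3
    nlinarith
  have h6 : Real.exp (-γ * t) ≤ 1 := by
    rw [Real.exp_le_one_iff]; nlinarith
  have h7 : 0 < Real.exp (-γ * t) := Real.exp_pos _
  have e4 : a * (2 / γ) * (γ * t / 2 * Real.exp (-γ * t / 2)) = a * t * Real.exp (-γ * t / 2) := by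
    field_simp
  have h8 : a * (2 / γ) * (Real.exp (-γ * t / 2) - Real.exp (-γ * t))
      ≤ a * t * Real.exp (-γ * t / 2) := by
    rw [← e4]
    apply mul_le_mul_of_nonneg_left h1
    positivity
  have h9 : b₀ / γ * (1 - Real.exp (-γ * t)) ≤ b₀ / γ := by
    have : 0 ≤ b₀ / γ := by positivity
    nlinarith
  linarith

set_option maxHeartbeats 1000000 in
/-- Hölder-type continuity of the `y`-derivative flow in the initial data:
with `b ∈ C_b^{2,2}` dissipative in `x` (constant `γ`), the `y`-derivative flows started
at `(x₁,y₁)` and `(x₂,y₂)` with a common noise path satisfy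
`|∇_y X^{x₁,y₁}_t − ∇_y X^{x₂,y₂}_t|² ≤ C t e^{-γt/2}|x₁−x₂|² + C|y₁−y₂|²`,
with `C = C(‖b‖₂,γ)` independent of `t`. -/
theorem stmt_5 {n m : ℕ}
    (b : EuclideanSpace ℝ (Fin n) → EuclideanSpace ℝ (Fin m) → EuclideanSpace ℝ (Fin n))
    (γ M : ℝ) (hγ : 0 < γ) (hM : 0 ≤ M)
    (hb : ContDiff ℝ 2 (fun p : EuclideanSpace ℝ (Fin n) × EuclideanSpace ℝ (Fin m) =>
      b p.1 p.2))
    -- ‖b‖₂ : all first and second derivatives bounded by M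
    (hbd1 : ∀ p, ‖fderiv ℝ (fun q : EuclideanSpace ℝ (Fin n) × EuclideanSpace ℝ (Fin m) =>
      b q.1 q.2) p‖ ≤ M)
    (hbd2 : ∀ p, ‖iteratedFDeriv ℝ 2
      (fun q : EuclideanSpace ℝ (Fin n) × EuclideanSpace ℝ (Fin m) => b q.1 q.2) p‖ ≤ M)
    (hdiss : ∀ x y h, ⟪fderiv ℝ (fun x' => b x' y) x h, h⟫ ≤ -γ * ‖h‖ ^ 2)
    (X : EuclideanSpace ℝ (Fin n) → EuclideanSpace ℝ (Fin m) → ℝ → EuclideanSpace ℝ (Fin n))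
    -- the basic contraction estimate for the flow is available
    (hcontr : ∃ C₀ : ℝ, 0 ≤ C₀ ∧ ∀ t, 0 ≤ t → ∀ x₁ x₂ y₁ y₂,
      ‖X x₁ y₁ t - X x₂ y₂ t‖ ^ 2 ≤
        Real.exp (-γ * t / 2) * ‖x₁ - x₂‖ ^ 2 + C₀ * ‖y₁ - y₂‖ ^ 2)
    (V : EuclideanSpace ℝ (Fin n) → EuclideanSpace ℝ (Fin m) → ℝ →
      (EuclideanSpace ℝ (Fin m) →L[ℝ] EuclideanSpace ℝ (Fin n)))
    (hV0 : ∀ x y, V x y 0 = 0)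
    (hV : ∀ x y t, HasDerivAt (V x y)
      ((fderiv ℝ (fun x' => b x' y) (X x y t)).comp (V x y t)
        + fderiv ℝ (fun y' => b (X x y t) y') y) t) :
    ∃ C : ℝ, 0 < C ∧ ∀ t, 0 ≤ t → ∀ x₁ x₂ y₁ y₂,
      ‖V x₁ y₁ t - V x₂ y₂ t‖ ^ 2 ≤
        C * t * Real.exp (-γ * t / 2) * ‖x₁ - x₂‖ ^ 2 + C * ‖y₁ - y₂‖ ^ 2 := by
  obtain ⟨C₀, hC₀, hcon⟩ := hcontr
  set Fb : EuclideanSpace ℝ (Fin n) × EuclideanSpace ℝ (Fin m) → EuclideanSpace ℝ (Fin n) :=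
    fun p => b p.1 p.2 with hFb
  have hFd : Differentiable ℝ Fb := hb.differentiable two_ne_zero
  -- partial derivatives as compositions with inl / inr
  have hAx : ∀ (x : EuclideanSpace ℝ (Fin n)) (y : EuclideanSpace ℝ (Fin m)), fderiv ℝ (fun x' => b x' y) x
      = (fderiv ℝ Fb (x, y)).comp (ContinuousLinearMap.inl ℝ (EuclideanSpace ℝ (Fin n)) (EuclideanSpace ℝ (Fin m))) := by
    intro x y
    exact ((hFd (x, y)).hasFDerivAt.comp x (hasFDerivAt_prodMk_left (𝕜 := ℝ) x y)).fderiv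
  have hAy : ∀ (x : EuclideanSpace ℝ (Fin n)) (y : EuclideanSpace ℝ (Fin m)), fderiv ℝ (fun y' => b x y') y
      = (fderiv ℝ Fb (x, y)).comp (ContinuousLinearMap.inr ℝ (EuclideanSpace ℝ (Fin n)) (EuclideanSpace ℝ (Fin m))) := by
    intro x y
    exact ((hFd (x, y)).hasFDerivAt.comp y (hasFDerivAt_prodMk_right x y)).fderiv
  -- Lipschitz bound on the full derivative
  have hGlip : ∀ p q : EuclideanSpace ℝ (Fin n) × EuclideanSpace ℝ (Fin m), ‖fderiv ℝ Fb p - fderiv ℝ Fb q‖ ≤ M * ‖p - q‖ := by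
    intro p q
    have hG1 : ContDiff ℝ 1 (fderiv ℝ Fb) := hb.fderiv_right (by norm_num)
    have hbd : ∀ z : EuclideanSpace ℝ (Fin n) × EuclideanSpace ℝ (Fin m), ‖fderiv ℝ (fderiv ℝ Fb) z‖ ≤ M := by
      intro z
      have h1 : ‖fderiv ℝ (fderiv ℝ Fb) z‖ ≤ ‖iteratedFDeriv ℝ 1 (fderiv ℝ Fb) z‖ := by
        apply ContinuousLinearMap.opNorm_le_bound _ (norm_nonneg _)
        intro v
        have := (iteratedFDeriv ℝ 1 (fderiv ℝ Fb) z).le_opNorm (fun _ => v)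
        simpa [iteratedFDeriv_one_apply] using this
      calc ‖fderiv ℝ (fderiv ℝ Fb) z‖ ≤ ‖iteratedFDeriv ℝ 1 (fderiv ℝ Fb) z‖ := h1
      _ = ‖iteratedFDeriv ℝ 2 Fb z‖ := norm_iteratedFDeriv_fderiv
      _ ≤ M := hbd2 z
    have := Convex.norm_image_sub_le_of_norm_fderiv_le
      (f := fderiv ℝ Fb) (fun z _ => (hG1.differentiable one_ne_zero z))
      (fun z _ => hbd z) convex_univ (Set.mem_univ q) (Set.mem_univ p)
    exact this
  -- norms of compositions with inl / inr
  have hinl : ∀ (T : (EuclideanSpace ℝ (Fin n) × EuclideanSpace ℝ (Fin m)) →L[ℝ] EuclideanSpace ℝ (Fin n)) (v : EuclideanSpace ℝ (Fin n)),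
      ‖(T.comp (ContinuousLinearMap.inl ℝ (EuclideanSpace ℝ (Fin n)) (EuclideanSpace ℝ (Fin m)))) v‖ ≤ ‖T‖ * ‖v‖ := by
    intro T v
    have : ‖((v, (0 : EuclideanSpace ℝ (Fin m))) : EuclideanSpace ℝ (Fin n) × EuclideanSpace ℝ (Fin m))‖ = ‖v‖ := by
      simp [Prod.norm_def]
    calc ‖(T.comp (ContinuousLinearMap.inl ℝ (EuclideanSpace ℝ (Fin n)) (EuclideanSpace ℝ (Fin m)))) v‖ = ‖T (v, 0)‖ := rfl
    _ ≤ ‖T‖ * ‖((v, (0 : EuclideanSpace ℝ (Fin m))) : EuclideanSpace ℝ (Fin n) × EuclideanSpace ℝ (Fin m))‖ := T.le_opNorm _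
    _ = ‖T‖ * ‖v‖ := by rw [this]
  have hinr : ∀ (T : (EuclideanSpace ℝ (Fin n) × EuclideanSpace ℝ (Fin m)) →L[ℝ] EuclideanSpace ℝ (Fin n)) (v : EuclideanSpace ℝ (Fin m)),
      ‖(T.comp (ContinuousLinearMap.inr ℝ (EuclideanSpace ℝ (Fin n)) (EuclideanSpace ℝ (Fin m)))) v‖ ≤ ‖T‖ * ‖v‖ := by
    intro T v
    have : ‖(((0 : EuclideanSpace ℝ (Fin n)), v) : EuclideanSpace ℝ (Fin n) × EuclideanSpace ℝ (Fin m))‖ = ‖v‖ := by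
      simp [Prod.norm_def]
    calc ‖(T.comp (ContinuousLinearMap.inr ℝ (EuclideanSpace ℝ (Fin n)) (EuclideanSpace ℝ (Fin m)))) v‖ = ‖T (0, v)‖ := rfl
    _ ≤ ‖T‖ * ‖(((0 : EuclideanSpace ℝ (Fin n)), v) : EuclideanSpace ℝ (Fin n) × EuclideanSpace ℝ (Fin m))‖ := T.le_opNorm _
    _ = ‖T‖ * ‖v‖ := by rw [this]
  -- bound on the y-partial derivative
  have hBbd : ∀ (x : EuclideanSpace ℝ (Fin n)) (y : EuclideanSpace ℝ (Fin m)) (v : EuclideanSpace ℝ (Fin m)), ‖fderiv ℝ (fun y' => b x y') y v‖ ≤ M * ‖v‖ := by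
    intro x y v
    rw [hAy]
    calc ‖((fderiv ℝ Fb (x, y)).comp (ContinuousLinearMap.inr ℝ (EuclideanSpace ℝ (Fin n)) (EuclideanSpace ℝ (Fin m)))) v‖
        ≤ ‖fderiv ℝ Fb (x, y)‖ * ‖v‖ := hinr _ v
    _ ≤ M * ‖v‖ := by
        apply mul_le_mul_of_nonneg_right (hbd1 (x, y)) (norm_nonneg v)
  -- Step 1: uniform bound ‖V x y t v‖ ≤ (M/γ) ‖v‖ for t ≥ 0
  have hVbd : ∀ (x : EuclideanSpace ℝ (Fin n)) (y : EuclideanSpace ℝ (Fin m)) (t : ℝ), 0 ≤ t → ∀ v : EuclideanSpace ℝ (Fin m),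
      ‖V x y t v‖ ≤ M / γ * ‖v‖ := by
    intro x y t ht v
    set h : ℝ → EuclideanSpace ℝ (Fin n) := fun s => V x y s v with hh
    have hd : ∀ s, HasDerivAt h
        ((fderiv ℝ (fun x' => b x' y) (X x y s)) (h s)
          + (fderiv ℝ (fun y' => b (X x y s) y') y) v) s := by
      intro s
      have := (hV x y s).clm_apply (hasDerivAt_const s v)
      simpa using this
    set g : ℝ → ℝ := fun s => ⟪h s, h s⟫ with hg
    set g' : ℝ → ℝ := fun s =>
      2 * ⟪(fderiv ℝ (fun x' => b x' y) (X x y s)) (h s)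
          + (fderiv ℝ (fun y' => b (X x y s) y') y) v, h s⟫ with hg'
    have hdg : ∀ s, HasDerivAt g (g' s) s := by
      intro s
      have : HasDerivAt g _ s := (hd s).inner ℝ (hd s)
      rw [hg']
      convert this using 1
      rw [real_inner_comm]
      ring
    have hg0 : g 0 = 0 := by simp [hg, hh, hV0]
    have hle : ∀ s, 0 ≤ s → g' s ≤ -γ * g s + 0 * Real.exp (-γ * s / 2) + M ^ 2 * ‖v‖ ^ 2 / γ := by
      intro s hs
      simp only [hg']
      have hd1 := hdiss (X x y s) y (h s)
      have hd2 : ⟪(fderiv ℝ (fun y' => b (X x y s) y') y) v, h s⟫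
          ≤ M * ‖v‖ * ‖h s‖ := by
        calc ⟪(fderiv ℝ (fun y' => b (X x y s) y') y) v, h s⟫
            ≤ ‖(fderiv ℝ (fun y' => b (X x y s) y') y) v‖ * ‖h s‖ := real_inner_le_norm _ _
        _ ≤ M * ‖v‖ * ‖h s‖ := by
            apply mul_le_mul_of_nonneg_right (hBbd _ _ _) (norm_nonneg _)
      rw [inner_add_left]
      have hgs : g s = ‖h s‖ ^ 2 := real_inner_self_eq_norm_sq (h s)
      rw [hgs]
      have key : 2 * (M * ‖v‖ * ‖h s‖) ≤ γ * ‖h s‖ ^ 2 + M ^ 2 * ‖v‖ ^ 2 / γ := by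
        have expand : γ * ‖h s‖ ^ 2 + M ^ 2 * ‖v‖ ^ 2 / γ - 2 * (M * ‖v‖ * ‖h s‖)
            = (γ * ‖h s‖ - M * ‖v‖) ^ 2 / γ := by field_simp; ring
        have : (0:ℝ) ≤ (γ * ‖h s‖ - M * ‖v‖) ^ 2 / γ := by positivity
        linarith
      linarith [hd1, hd2, key]
    have := gron_aux hγ le_rfl (by positivity) hg0 hdg hle ht
    have hgt : ‖h t‖ ^ 2 ≤ M ^ 2 * ‖v‖ ^ 2 / γ / γ := by
      rw [← real_inner_self_eq_norm_sq]
      simpa [hg] using this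
    have h2 : ‖h t‖ ^ 2 ≤ (M / γ * ‖v‖) ^ 2 := by
      calc ‖h t‖ ^ 2 ≤ M ^ 2 * ‖v‖ ^ 2 / γ / γ := hgt
      _ = (M / γ * ‖v‖) ^ 2 := by field_simp
    have hpos : (0:ℝ) ≤ M / γ * ‖v‖ := by positivity
    exact (pow_le_pow_iff_left₀ (norm_nonneg _) hpos two_ne_zero).mp h2
  -- constants
  set K₁ : ℝ := M * (M / γ) + M with hK₁
  have hK₁0 : 0 ≤ K₁ := by positivity
  set C : ℝ := K₁ ^ 2 / γ + K₁ ^ 2 * (C₀ + 1) / γ ^ 2 + 1 with hC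
  refine ⟨C, by positivity, ?_⟩
  intro t ht x₁ x₂ y₁ y₂
  -- the main estimate, for each vector v
  have main : ∀ v : EuclideanSpace ℝ (Fin m), ‖(V x₁ y₁ t - V x₂ y₂ t) v‖ ^ 2 ≤
      (C * t * Real.exp (-γ * t / 2) * ‖x₁ - x₂‖ ^ 2 + C * ‖y₁ - y₂‖ ^ 2) * ‖v‖ ^ 2 := by
    intro v
    set h : ℝ → EuclideanSpace ℝ (Fin n) := fun s => V x₁ y₁ s v - V x₂ y₂ s v with hh
    set e : ℝ → EuclideanSpace ℝ (Fin n) := fun s =>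
      ((fderiv ℝ (fun x' => b x' y₁) (X x₁ y₁ s)) (V x₂ y₂ s v)
        - (fderiv ℝ (fun x' => b x' y₂) (X x₂ y₂ s)) (V x₂ y₂ s v))
      + ((fderiv ℝ (fun y' => b (X x₁ y₁ s) y') y₁) v
        - (fderiv ℝ (fun y' => b (X x₂ y₂ s) y') y₂) v) with he
    have hd : ∀ s, HasDerivAt h
        ((fderiv ℝ (fun x' => b x' y₁) (X x₁ y₁ s)) (h s) + e s) s := by
      intro s
      have h1 := (hV x₁ y₁ s).clm_apply (hasDerivAt_const s v)
      have h2 := (hV x₂ y₂ s).clm_apply (hasDerivAt_const s v)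
      have : HasDerivAt h _ s := h1.sub h2
      convert this using 1
      simp only [hh, he, ContinuousLinearMap.add_apply, ContinuousLinearMap.comp_apply,
        ContinuousLinearMap.zero_apply, map_sub, map_zero, add_zero]
      abel
    -- bound on ‖e s‖
    have hebd : ∀ s, 0 ≤ s → ‖e s‖ ^ 2 ≤
        K₁ ^ 2 * ‖v‖ ^ 2 * (Real.exp (-γ * s / 2) * ‖x₁ - x₂‖ ^ 2 + (C₀ + 1) * ‖y₁ - y₂‖ ^ 2) := by
      intro s hs
      set p₁ : EuclideanSpace ℝ (Fin n) × EuclideanSpace ℝ (Fin m) := (X x₁ y₁ s, y₁) with hp₁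
      set p₂ : EuclideanSpace ℝ (Fin n) × EuclideanSpace ℝ (Fin m) := (X x₂ y₂ s, y₂) with hp₂
      have hdiff : ‖fderiv ℝ Fb p₁ - fderiv ℝ Fb p₂‖ ≤ M * ‖p₁ - p₂‖ := hGlip p₁ p₂
      have hterm1 : ‖(fderiv ℝ (fun x' => b x' y₁) (X x₁ y₁ s)) (V x₂ y₂ s v)
          - (fderiv ℝ (fun x' => b x' y₂) (X x₂ y₂ s)) (V x₂ y₂ s v)‖
          ≤ M * ‖p₁ - p₂‖ * (M / γ * ‖v‖) := by
        rw [hAx, hAx]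
        have heq : ((fderiv ℝ Fb p₁).comp (ContinuousLinearMap.inl ℝ (EuclideanSpace ℝ (Fin n)) (EuclideanSpace ℝ (Fin m)))) (V x₂ y₂ s v)
            - ((fderiv ℝ Fb p₂).comp (ContinuousLinearMap.inl ℝ (EuclideanSpace ℝ (Fin n)) (EuclideanSpace ℝ (Fin m)))) (V x₂ y₂ s v)
            = ((fderiv ℝ Fb p₁ - fderiv ℝ Fb p₂).comp (ContinuousLinearMap.inl ℝ (EuclideanSpace ℝ (Fin n)) (EuclideanSpace ℝ (Fin m))))
              (V x₂ y₂ s v) := by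
          simp
        rw [heq]
        calc ‖((fderiv ℝ Fb p₁ - fderiv ℝ Fb p₂).comp (ContinuousLinearMap.inl ℝ (EuclideanSpace ℝ (Fin n)) (EuclideanSpace ℝ (Fin m))))
              (V x₂ y₂ s v)‖
            ≤ ‖fderiv ℝ Fb p₁ - fderiv ℝ Fb p₂‖ * ‖V x₂ y₂ s v‖ := hinl _ _
        _ ≤ M * ‖p₁ - p₂‖ * (M / γ * ‖v‖) := by
            apply mul_le_mul hdiff (hVbd x₂ y₂ s hs v) (norm_nonneg _) (by positivity)
      have hterm2 : ‖(fderiv ℝ (fun y' => b (X x₁ y₁ s) y') y₁) v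
          - (fderiv ℝ (fun y' => b (X x₂ y₂ s) y') y₂) v‖ ≤ M * ‖p₁ - p₂‖ * ‖v‖ := by
        rw [hAy, hAy]
        have heq : ((fderiv ℝ Fb p₁).comp (ContinuousLinearMap.inr ℝ (EuclideanSpace ℝ (Fin n)) (EuclideanSpace ℝ (Fin m)))) v
            - ((fderiv ℝ Fb p₂).comp (ContinuousLinearMap.inr ℝ (EuclideanSpace ℝ (Fin n)) (EuclideanSpace ℝ (Fin m)))) v
            = ((fderiv ℝ Fb p₁ - fderiv ℝ Fb p₂).comp (ContinuousLinearMap.inr ℝ (EuclideanSpace ℝ (Fin n)) (EuclideanSpace ℝ (Fin m)))) v := by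
          simp
        rw [heq]
        calc ‖((fderiv ℝ Fb p₁ - fderiv ℝ Fb p₂).comp (ContinuousLinearMap.inr ℝ (EuclideanSpace ℝ (Fin n)) (EuclideanSpace ℝ (Fin m)))) v‖
            ≤ ‖fderiv ℝ Fb p₁ - fderiv ℝ Fb p₂‖ * ‖v‖ := hinr _ _
        _ ≤ M * ‖p₁ - p₂‖ * ‖v‖ := by
            apply mul_le_mul_of_nonneg_right hdiff (norm_nonneg _)
      have hE : ‖e s‖ ≤ K₁ * ‖p₁ - p₂‖ * ‖v‖ := by
        calc ‖e s‖ ≤ ‖(fderiv ℝ (fun x' => b x' y₁) (X x₁ y₁ s)) (V x₂ y₂ s v)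
            - (fderiv ℝ (fun x' => b x' y₂) (X x₂ y₂ s)) (V x₂ y₂ s v)‖
            + ‖(fderiv ℝ (fun y' => b (X x₁ y₁ s) y') y₁) v
            - (fderiv ℝ (fun y' => b (X x₂ y₂ s) y') y₂) v‖ := norm_add_le _ _
        _ ≤ M * ‖p₁ - p₂‖ * (M / γ * ‖v‖) + M * ‖p₁ - p₂‖ * ‖v‖ := add_le_add hterm1 hterm2
        _ = K₁ * ‖p₁ - p₂‖ * ‖v‖ := by rw [hK₁]; ring
      have hpnorm : ‖p₁ - p₂‖ ^ 2 ≤ ‖X x₁ y₁ s - X x₂ y₂ s‖ ^ 2 + ‖y₁ - y₂‖ ^ 2 := by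
        have hps : p₁ - p₂ = (X x₁ y₁ s - X x₂ y₂ s, y₁ - y₂) := rfl
        rw [hps, Prod.norm_def]
        rcases max_cases ‖X x₁ y₁ s - X x₂ y₂ s‖ ‖y₁ - y₂‖ with ⟨hm, _⟩ | ⟨hm, _⟩ <;>
          rw [hm] <;> nlinarith [sq_nonneg ‖X x₁ y₁ s - X x₂ y₂ s‖, sq_nonneg ‖y₁ - y₂‖]
      have hX := hcon s hs x₁ x₂ y₁ y₂
      have hE2 : ‖e s‖ ^ 2 ≤ K₁ ^ 2 * ‖p₁ - p₂‖ ^ 2 * ‖v‖ ^ 2 := by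
        have := mul_le_mul hE hE (norm_nonneg _) (by positivity)
        nlinarith [this]
      calc ‖e s‖ ^ 2 ≤ K₁ ^ 2 * ‖p₁ - p₂‖ ^ 2 * ‖v‖ ^ 2 := hE2
      _ ≤ K₁ ^ 2 * (Real.exp (-γ * s / 2) * ‖x₁ - x₂‖ ^ 2 + C₀ * ‖y₁ - y₂‖ ^ 2 + ‖y₁ - y₂‖ ^ 2)
          * ‖v‖ ^ 2 := by
          apply mul_le_mul_of_nonneg_right _ (by positivity)
          apply mul_le_mul_of_nonneg_left _ (by positivity)
          linarith [hpnorm, hX]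
      _ = K₁ ^ 2 * ‖v‖ ^ 2 * (Real.exp (-γ * s / 2) * ‖x₁ - x₂‖ ^ 2
          + (C₀ + 1) * ‖y₁ - y₂‖ ^ 2) := by ring
    -- Grönwall setup
    set g : ℝ → ℝ := fun s => ⟪h s, h s⟫ with hg
    set g' : ℝ → ℝ := fun s =>
      2 * ⟪(fderiv ℝ (fun x' => b x' y₁) (X x₁ y₁ s)) (h s) + e s, h s⟫ with hg'
    have hdg : ∀ s, HasDerivAt g (g' s) s := by
      intro s
      have : HasDerivAt g _ s := (hd s).inner ℝ (hd s)
      rw [hg']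
      convert this using 1
      rw [real_inner_comm]
      ring
    have hg0 : g 0 = 0 := by simp [hg, hh, hV0]
    set a : ℝ := K₁ ^ 2 * ‖v‖ ^ 2 * ‖x₁ - x₂‖ ^ 2 / γ with ha
    set b₀ : ℝ := K₁ ^ 2 * ‖v‖ ^ 2 * (C₀ + 1) * ‖y₁ - y₂‖ ^ 2 / γ with hb₀
    have hle : ∀ s, 0 ≤ s → g' s ≤ -γ * g s + a * Real.exp (-γ * s / 2) + b₀ := by
      intro s hs
      simp only [hg']
      rw [inner_add_left]
      have hd1 := hdiss (X x₁ y₁ s) y₁ (h s)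
      have hd2 : ⟪e s, h s⟫ ≤ ‖e s‖ * ‖h s‖ := real_inner_le_norm _ _
      have hgs : g s = ‖h s‖ ^ 2 := real_inner_self_eq_norm_sq (h s)
      rw [hgs]
      have heb := hebd s hs
      -- 2⟪e,h⟫ ≤ γ‖h‖² + ‖e‖²/γ
      have key : 2 * (‖e s‖ * ‖h s‖) ≤ γ * ‖h s‖ ^ 2 + ‖e s‖ ^ 2 / γ := by
        have expand : γ * ‖h s‖ ^ 2 + ‖e s‖ ^ 2 / γ - 2 * (‖e s‖ * ‖h s‖)
            = (γ * ‖h s‖ - ‖e s‖) ^ 2 / γ := by field_simp; ring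
        have hpos : (0:ℝ) ≤ (γ * ‖h s‖ - ‖e s‖) ^ 2 / γ := by positivity
        linarith
      have hEγ : ‖e s‖ ^ 2 / γ ≤ a * Real.exp (-γ * s / 2) + b₀ := by
        rw [ha, hb₀]
        rw [div_le_iff₀ hγ]
        calc ‖e s‖ ^ 2 ≤ K₁ ^ 2 * ‖v‖ ^ 2 * (Real.exp (-γ * s / 2) * ‖x₁ - x₂‖ ^ 2
            + (C₀ + 1) * ‖y₁ - y₂‖ ^ 2) := heb
        _ = (K₁ ^ 2 * ‖v‖ ^ 2 * ‖x₁ - x₂‖ ^ 2 / γ * Real.exp (-γ * s / 2)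
            + K₁ ^ 2 * ‖v‖ ^ 2 * (C₀ + 1) * ‖y₁ - y₂‖ ^ 2 / γ) * γ := by field_simp
      linarith
    have := gron_aux hγ (by rw [ha]; positivity) (by rw [hb₀]; positivity) hg0 hdg hle ht
    have hgt : ‖h t‖ ^ 2 ≤ a * t * Real.exp (-γ * t / 2) + b₀ / γ := by
      rw [← real_inner_self_eq_norm_sq]
      exact this
    have hfin : a * t * Real.exp (-γ * t / 2) + b₀ / γ ≤
        (C * t * Real.exp (-γ * t / 2) * ‖x₁ - x₂‖ ^ 2 + C * ‖y₁ - y₂‖ ^ 2) * ‖v‖ ^ 2 := by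
      have e1 : a * t * Real.exp (-γ * t / 2)
          = (K₁ ^ 2 / γ) * t * Real.exp (-γ * t / 2) * ‖x₁ - x₂‖ ^ 2 * ‖v‖ ^ 2 := by
        rw [ha]; ring
      have e2 : b₀ / γ = (K₁ ^ 2 * (C₀ + 1) / γ ^ 2) * ‖y₁ - y₂‖ ^ 2 * ‖v‖ ^ 2 := by
        rw [hb₀]; field_simp
      rw [e1, e2]
      have hc1 : K₁ ^ 2 / γ ≤ C := by
        rw [hC]
        have : 0 ≤ K₁ ^ 2 * (C₀ + 1) / γ ^ 2 := by positivity
        linarith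
      have hc2 : K₁ ^ 2 * (C₀ + 1) / γ ^ 2 ≤ C := by
        rw [hC]
        have : 0 ≤ K₁ ^ 2 / γ := by positivity
        linarith
      have t1 : (K₁ ^ 2 / γ) * t * Real.exp (-γ * t / 2) * ‖x₁ - x₂‖ ^ 2 * ‖v‖ ^ 2
          ≤ C * t * Real.exp (-γ * t / 2) * ‖x₁ - x₂‖ ^ 2 * ‖v‖ ^ 2 := by
        apply mul_le_mul_of_nonneg_right _ (by positivity)
        apply mul_le_mul_of_nonneg_right _ (by positivity)
        apply mul_le_mul_of_nonneg_right _ (by positivity)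
        apply mul_le_mul_of_nonneg_right hc1 ht
      have t2 : (K₁ ^ 2 * (C₀ + 1) / γ ^ 2) * ‖y₁ - y₂‖ ^ 2 * ‖v‖ ^ 2
          ≤ C * ‖y₁ - y₂‖ ^ 2 * ‖v‖ ^ 2 := by
        apply mul_le_mul_of_nonneg_right _ (by positivity)
        apply mul_le_mul_of_nonneg_right hc2 (by positivity)
      calc (K₁ ^ 2 / γ) * t * Real.exp (-γ * t / 2) * ‖x₁ - x₂‖ ^ 2 * ‖v‖ ^ 2
          + (K₁ ^ 2 * (C₀ + 1) / γ ^ 2) * ‖y₁ - y₂‖ ^ 2 * ‖v‖ ^ 2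
          ≤ C * t * Real.exp (-γ * t / 2) * ‖x₁ - x₂‖ ^ 2 * ‖v‖ ^ 2
          + C * ‖y₁ - y₂‖ ^ 2 * ‖v‖ ^ 2 := add_le_add t1 t2
      _ = (C * t * Real.exp (-γ * t / 2) * ‖x₁ - x₂‖ ^ 2 + C * ‖y₁ - y₂‖ ^ 2) * ‖v‖ ^ 2 := by
          ring
    have : ‖(V x₁ y₁ t - V x₂ y₂ t) v‖ = ‖h t‖ := by
      rw [hh]; simp
    rw [this]
    linarith
  -- conclude operator norm bound
  set R : ℝ := C * t * Real.exp (-γ * t / 2) * ‖x₁ - x₂‖ ^ 2 + C * ‖y₁ - y₂‖ ^ 2 with hR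
  have hCpos : 0 < C := by rw [hC]; positivity
  have hR0 : 0 ≤ R := by rw [hR]; positivity
  have hop : ‖V x₁ y₁ t - V x₂ y₂ t‖ ≤ Real.sqrt R := by
    apply ContinuousLinearMap.opNorm_le_bound _ (Real.sqrt_nonneg R)
    intro v
    have hmv := main v
    have : ‖(V x₁ y₁ t - V x₂ y₂ t) v‖ ^ 2 ≤ (Real.sqrt R * ‖v‖) ^ 2 := by
      rw [mul_pow, Real.sq_sqrt hR0]
      exact hmv
    exact (pow_le_pow_iff_left₀ (norm_nonneg _) (by positivity) two_ne_zero).mp this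
  exact le_trans (pow_le_pow_left₀ (norm_nonneg _) hop 2) (le_of_eq (Real.sq_sqrt hR0))
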